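/- In consequence of the previous operator computation: for v = a_{i_1}···a_{i_k}, the evaluation X_{i_1}···X_{i_k}(h)(0) of the composed operators on the identity function h(x)=x at x=0 is nonzero only if i_1 + ··· + i_k = k − 1, in which case it equals i_k(i_k+i_{k−1}−1)···(i_k+···+i_2−k+2), provided all partial sums i_k+···+i_{j}−(k−j) are nonnegative. -/

import Mathlib

/-- The vector field `X_i = x^i ∂/∂x` as a first-order differential operator. -/
noncomputable def Xop (i : ℕ) (f : ℝ → ℝ) : ℝ → ℝ := fun x => x ^ i * deriv f x

/-- The composition `X_{i_1} ∘ ⋯ ∘ X_{i_k}` of the operators along a word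
`[i_1, …, i_k]` (the head `i_1` is applied last, i.e. outermost). -/
noncomputable def Xcomp : List ℕ → (ℝ → ℝ) → (ℝ → ℝ)
  | [], f => f
  | i :: is, f => Xop i (Xcomp is f)

/-- exponent of the monomial obtained by applying the word to `x`. -/
def Mn : List ℕ → ℕ
  | [] => 1
  | i :: is => i + Mn is - 1

/-- coefficient of the monomial obtained by applying the word to `x`. -/
def Cn : List ℕ → ℕ
  | [] => 1
  | i :: is => Cn is * Mn is

lemma xcomp_eq (is : List ℕ) :
    Xcomp is (fun y => y) = fun x => (Cn is : ℝ) * x ^ Mn is := by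
  induction is with
  | nil => funext x; simp [Xcomp, Cn, Mn]
  | cons i is ih =>
    funext x
    simp only [Xcomp, Xop, ih]
    rw [deriv_const_mul _ ((differentiable_pow (Mn is)).differentiableAt), deriv_pow_field]
    cases hM : Mn is with
    | zero => simp [Cn, Mn, hM]
    | succ m =>
      simp only [Cn, Mn, hM]
      push_cast
      rw [show i + (m + 1) - 1 = i + m by omega, pow_add]
      ring

lemma Mn_eq_of_C (is : List ℕ) (hC : Cn is ≠ 0) :
    Mn is + is.length = is.sum + 1 := by
  induction is with
  | nil => simp [Mn]
  | cons i is ih =>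
    have h1 : Cn is ≠ 0 := fun h => hC (by simp [Cn, h])
    have h2 : Mn is ≠ 0 := fun h => hC (by simp [Cn, h])
    have := ih h1
    simp only [Mn, List.length_cons, List.sum_cons]
    omega

lemma Mn_eq (is : List ℕ) (H : ∀ t, (is.drop t).length ≤ (is.drop t).sum + 1) :
    Mn is + is.length = is.sum + 1 := by
  induction is with
  | nil => simp [Mn]
  | cons i is ih =>
    have h0 := H 0
    have ih' := ih (fun t => by simpa using H (t + 1))
    simp only [List.drop_zero, List.length_cons, List.sum_cons] at h0
    simp only [Mn, List.length_cons, List.sum_cons]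
    omega

lemma Cn_eq (is : List ℕ) :
    Cn is = ∏ t ∈ Finset.range is.length, Mn (is.drop (t + 1)) := by
  induction is with
  | nil => simp [Cn]
  | cons i is ih =>
    rw [List.length_cons, Finset.prod_range_succ']
    simp only [List.drop_succ_cons, List.drop_zero]
    rw [← ih]
    rfl

theorem stmt18 (is : List ℕ) (hk : 2 ≤ is.length) :
    (Xcomp is (fun y => y) 0 ≠ 0 → is.sum = is.length - 1) ∧
    (is.sum = is.length - 1 →
      (∀ t ∈ Finset.range (is.length - 1), is.length ≤ (is.drop (t + 1)).sum + t + 2) →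
      Xcomp is (fun y => y) 0 =
        ∏ t ∈ Finset.range (is.length - 1),
          (((is.drop (t + 1)).sum : ℝ) - ((is.length : ℝ) - (t : ℝ) - 2))) := by
  have key := xcomp_eq is
  constructor
  · intro hne
    rw [key] at hne
    have hM : Mn is = 0 := by
      by_contra h
      simp [zero_pow h] at hne
    have hC : Cn is ≠ 0 := by
      intro h; simp [h] at hne
    have := Mn_eq_of_C is hC
    omega
  · intro hs hcond
    have H : ∀ t, (is.drop t).length ≤ (is.drop t).sum + 1 := by
      intro t
      rw [List.length_drop]
      cases t with
      | zero => simpa using by omega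
      | succ t' =>
        by_cases h : t' < is.length - 1
        · have := hcond t' (Finset.mem_range.mpr h)
          omega
        · omega
    have hMdrop : ∀ t, Mn (is.drop t) + (is.drop t).length = (is.drop t).sum + 1 := by
      intro t
      exact Mn_eq _ (fun t' => by
        rw [List.drop_drop]
        exact H (t + t'))
    have hM : Mn is = 0 := by
      have := Mn_eq is H
      omega
    rw [key]
    simp only [hM, pow_zero, mul_one]
    rw [Cn_eq]
    have hk1 : is.length = (is.length - 1) + 1 := by omega
    rw [hk1, Finset.prod_range_succ, ← hk1]
    rw [List.drop_length]
    show ((((∏ t ∈ Finset.range (is.length - 1), Mn (is.drop (t + 1))) * Mn []) : ℕ) : ℝ) = _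
    rw [show Mn [] = 1 from rfl, mul_one]
    push_cast
    apply Finset.prod_congr rfl
    intro t ht
    rw [Finset.mem_range] at ht
    have h1 := hMdrop (t + 1)
    rw [List.length_drop] at h1
    have h2 := H (t + 1)
    rw [List.length_drop] at h2
    have hn : Mn (is.drop (t + 1)) + is.length = (is.drop (t + 1)).sum + t + 2 := by omega
    have := congrArg (Nat.cast : ℕ → ℝ) hn
    push_cast at this
    linarith
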